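/- Quotient of a Laurent extension detects divisibility: Let Φ: R → R[t^{±1}] be a G_m-coaction, c a nonzero semi-invariant, and s ∈ R_c a local slice of degree d. Then for every a ∈ R_c, Φ(a) lies in R_c[t^{±d}], i.e., only powers of t divisible by d occur in Φ(a). -/

import Mathlib

open LaurentPolynomial

def IsGmCoaction {R : Type*} [CommRing R] (Φ : R →+* LaurentPolynomial R) : Prop :=
  (∀ a : R, (Φ a).coeff.sum (fun _ r => r) = a) ∧
  (∀ a : R, Finsupp.mapRange ⇑Φ (map_zero Φ) (Φ a).coeff =
    (Φ a).coeff.sum fun k r => Finsupp.single k (LaurentPolynomial.C r * LaurentPolynomial.T k))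

/-- if `s ∈ R_c` is a `G_m`-local slice of degree `d`, then for every
`a ∈ R_c` only powers `t^k` with `d ∣ k` occur in `Φ(a)`, i.e. `Φ(a) ∈ R_c[t^{±d}]`. -/
theorem stmt19 {K R : Type*} [CommRing K] [CommRing R] [Algebra K R]
    (Φ : R →ₐ[K] LaurentPolynomial R) (hΦ : IsGmCoaction Φ.toRingHom)
    (c : R) (hc : c ≠ 0) (w : ℤ) (hw : Φ c = LaurentPolynomial.C c * LaurentPolynomial.T w)
    (Φc : Localization.Away c →+* LaurentPolynomial (Localization.Away c))
    (hext : ∀ r : R, (Φc (algebraMap R (Localization.Away c) r)).coeff =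
      Finsupp.mapRange (algebraMap R (Localization.Away c))
        (map_zero (algebraMap R (Localization.Away c))) (Φ r).coeff)
    (d : ℤ) (hd : 0 < d)
    (s : Localization.Away c) (hunit : IsUnit s)
    (hsemi : Φc s = LaurentPolynomial.C s * LaurentPolynomial.T (-d))
    (hslice : ∀ a : Localization.Away c,
      (∀ k : ℤ, d ≤ |k| → (Φc a).coeff k = 0) → Φc a = LaurentPolynomial.C a) :
    ∀ (a : Localization.Away c) (k : ℤ), ¬ d ∣ k → (Φc a).coeff k = 0 := by
  classical
  set f := algebraMap R (Localization.Away c) with hf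
  have hext' : ∀ r : R, Φc (f r) = AddMonoidAlgebra.ofCoeff
      (Finsupp.mapRange f (map_zero f) (Φ r).coeff) := by
    intro r; rw [← hext]
  -- Step 1: coefficients of Φ r are semi-invariants (on R)
  have L1 : ∀ (r : R) (j : ℤ), Φ ((Φ r).coeff j) = LaurentPolynomial.C ((Φ r).coeff j) * T j := by
    intro r j
    have h2 := hΦ.2 r
    simp only [AlgHom.toRingHom_eq_coe, RingHom.coe_coe] at h2
    have h3 := congrArg (fun p => p j) h2
    simp only [Finsupp.mapRange_apply] at h3
    rw [Finsupp.sum_apply] at h3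
    simp only [Finsupp.single_apply] at h3
    rw [Finsupp.sum_ite_eq'] at h3
    by_cases hz : (Φ r).coeff j = 0
    · rw [hz]; simp
    · have hj : j ∈ (Φ r).coeff.support := Finsupp.mem_support_iff.mpr hz
      simpa [hj] using h3
  -- Step 2: image in the localization of those coefficients
  have L2 : ∀ (r : R) (j : ℤ),
      Φc (f ((Φ r).coeff j)) = LaurentPolynomial.C (f ((Φ r).coeff j)) * T j := by
    intro r j
    rw [hext', L1 r j, ← single_eq_C_mul_T, AddMonoidAlgebra.coeff_single, Finsupp.mapRange_single]
    exact single_eq_C_mul_T _ _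
  -- multiplicativity of weights
  have Hmul : ∀ (x y : Localization.Away c) (m m' : ℤ),
      Φc x = LaurentPolynomial.C x * T m → Φc y = LaurentPolynomial.C y * T m' →
      Φc (x * y) = LaurentPolynomial.C (x * y) * T (m + m') := by
    intro x y m m' hx hy
    rw [map_mul, hx, hy, map_mul, T_add]
    ring
  have Hpow : ∀ (x : Localization.Away c) (m : ℤ), Φc x = LaurentPolynomial.C x * T m →
      ∀ n : ℕ, Φc (x ^ n) = LaurentPolynomial.C (x ^ n) * T (n * m) := by
    intro x m hx n
    rw [map_pow, hx, mul_pow, ← map_pow, T_pow]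
  -- weight of f c
  have hfc : Φc (f c) = LaurentPolynomial.C (f c) * T w := by
    rw [hext', hw, ← single_eq_C_mul_T, AddMonoidAlgebra.coeff_single, Finsupp.mapRange_single]
    exact single_eq_C_mul_T _ _
  -- Step 3: coefficients of Φc a are semi-invariants
  have L3 : ∀ (a : Localization.Away c) (j : ℤ),
      Φc ((Φc a).coeff j) = LaurentPolynomial.C ((Φc a).coeff j) * T j := by
    intro a j
    obtain ⟨⟨r, m⟩, hm⟩ := IsLocalization.surj (Submonoid.powers c) a
    obtain ⟨n, hn⟩ := m.2
    have hn' : c ^ n = (m : R) := hn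
    have hm' : a * f (c ^ n) = f r := by
      rw [hn']; exact hm
    have hfcn : Φc (f (c ^ n)) = LaurentPolynomial.C (f (c ^ n)) * T (n * w) := by
      rw [map_pow]; exact Hpow (f c) w hfc n
    have h1 : Φc a * Φc (f (c ^ n)) = Φc (f r) := by
      rw [← map_mul, hm']
    have key : (Φc a).coeff j * f (c ^ n) = f ((Φ r).coeff (j + n * w)) := by
      rw [hfcn, hext'] at h1
      have h4 := congrArg (fun p => p.coeff (j + (n : ℤ) * w)) h1
      simp only [AddMonoidAlgebra.coeff_ofCoeff, Finsupp.mapRange_apply] at h4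
      rw [← single_eq_C_mul_T] at h4
      have h5 : (Φc a * AddMonoidAlgebra.single ((n : ℤ) * w) (f (c ^ n))).coeff
          (j + (n : ℤ) * w) = (Φc a).coeff (j + (n : ℤ) * w - (n : ℤ) * w) * f (c ^ n) := by
        rw [AddMonoidAlgebra.coeff_mul_single_apply, sub_eq_add_neg]
      rw [h5] at h4
      simpa using h4
    have h6 := congrArg Φc key
    rw [map_mul, hfcn, L2 r (j + n * w), ← key, map_mul] at h6
    have hu : IsUnit (LaurentPolynomial.C (f (c ^ n)) * T ((n : ℤ) * w)) := by
      refine IsUnit.mul ?_ (isUnit_T _)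
      exact (IsLocalization.map_units (Localization.Away c)
        (⟨c ^ n, ⟨n, rfl⟩⟩ : Submonoid.powers c)).map LaurentPolynomial.C
    apply hu.mul_left_cancel
    calc LaurentPolynomial.C (f (c ^ n)) * T ((n : ℤ) * w) * Φc ((Φc a).coeff j)
        = Φc ((Φc a).coeff j) * (LaurentPolynomial.C (f (c ^ n)) * T ((n : ℤ) * w)) := by ring
      _ = LaurentPolynomial.C ((Φc a).coeff j) * LaurentPolynomial.C (f (c ^ n))
            * T (j + n * w) := h6
      _ = LaurentPolynomial.C (f (c ^ n)) * T ((n : ℤ) * w) *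
            (LaurentPolynomial.C ((Φc a).coeff j) * T j) := by
          rw [T_add]; ring
  -- the inverse of s has weight d
  obtain ⟨u, hu⟩ := hunit
  have hsinv : Φc ((u⁻¹ : (Localization.Away c)ˣ) : Localization.Away c) =
      LaurentPolynomial.C ((u⁻¹ : (Localization.Away c)ˣ) : Localization.Away c) * T d := by
    have h1 : Φc s * Φc ((u⁻¹ : (Localization.Away c)ˣ) : Localization.Away c) = 1 := by
      rw [← map_mul, ← hu, Units.mul_inv, map_one]
    have h2 : Φc s * (LaurentPolynomial.C
        ((u⁻¹ : (Localization.Away c)ˣ) : Localization.Away c) * T d) = 1 := by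
      rw [hsemi]
      have h3 : LaurentPolynomial.C s * T (-d) * (LaurentPolynomial.C
          ((u⁻¹ : (Localization.Away c)ˣ) : Localization.Away c) * T d)
          = LaurentPolynomial.C (s * ((u⁻¹ : (Localization.Away c)ˣ) :
            Localization.Away c)) * T (-d + d) := by
        rw [map_mul, T_add]; ring
      rw [h3, ← hu, Units.mul_inv]
      simp
    have hus : IsUnit (Φc s) := IsUnit.map Φc ⟨u, hu⟩
    exact hus.mul_left_cancel (h1.trans h2.symm)
  -- main argument
  intro a k hk
  set b := (Φc a).coeff k with hb
  have hbw : Φc b = LaurentPolynomial.C b * T k := L3 a k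
  have hrd : d * (k / d) + k % d = k := Int.mul_ediv_add_emod k d
  have hr0 : 0 ≤ k % d := Int.emod_nonneg k (ne_of_gt hd)
  have hr1 : k % d < d := Int.emod_lt_of_pos k hd
  have hrne : k % d ≠ 0 := fun h => hk (Int.dvd_iff_emod_eq_zero.mpr h)
  -- choose a unit of weight -(d*(k/d))
  have hW : ∃ v : Localization.Away c, IsUnit v ∧
      Φc v = LaurentPolynomial.C v * T (-(d * (k / d))) := by
    rcases le_or_gt 0 (k / d) with hq0 | hq0
    · refine ⟨s ^ (k / d).toNat, IsUnit.pow _ ⟨u, hu⟩, ?_⟩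
      have h9 := Hpow s (-d) hsemi (k / d).toNat
      rw [Int.toNat_of_nonneg hq0] at h9
      rw [h9, (by ring : k / d * -d = -(d * (k / d)))]
    · refine ⟨((u⁻¹ : (Localization.Away c)ˣ) : Localization.Away c) ^ (-(k / d)).toNat,
        IsUnit.pow _ (u⁻¹ : (Localization.Away c)ˣ).isUnit, ?_⟩
      have h9 := Hpow _ d hsinv (-(k / d)).toNat
      rw [Int.toNat_of_nonneg (by omega : (0:ℤ) ≤ -(k / d))] at h9
      rw [h9, (by ring : -(k / d) * d = -(d * (k / d)))]
  obtain ⟨v, hvu, hv⟩ := hW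
  have hev : Φc (b * v) = LaurentPolynomial.C (b * v) * T (k % d) := by
    have h10 := Hmul b v k (-(d * (k / d))) hbw hv
    rw [h10, (by linear_combination -hrd : k + -(d * (k / d)) = k % d)]
  have hcoef : ∀ j : ℤ, d ≤ |j| → (Φc (b * v)).coeff j = 0 := by
    intro j hj
    rw [hev, ← single_eq_C_mul_T, AddMonoidAlgebra.coeff_single, Finsupp.single_apply]
    have hne : k % d ≠ j := by
      intro h
      rw [← h, abs_of_nonneg hr0] at hj
      omega
    rw [if_neg hne]
  have hcs : Φc (b * v) = LaurentPolynomial.C (b * v) := hslice (b * v) hcoef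
  have hzero : b * v = 0 := by
    have h7 : (AddMonoidAlgebra.single (k % d) (b * v) : LaurentPolynomial (Localization.Away c))
        = AddMonoidAlgebra.single 0 (b * v) := by
      rw [single_eq_C_mul_T, single_eq_C_mul_T, T_zero, mul_one, ← hev, hcs]
    have h8 := congrArg (fun p => p.coeff (k % d)) h7
    simp only [AddMonoidAlgebra.coeff_single, Finsupp.single_apply] at h8
    rw [if_neg (show ¬ (0 : ℤ) = k % d from fun h => hrne h.symm)] at h8
    simpa using h8
  obtain ⟨vu, hvu'⟩ := hvu
  rw [← hvu'] at hzero
  exact (Units.mul_left_eq_zero vu).mp hzero
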